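/- arXiv:2302.09039 — 5 statements merged into one kernel-verified Lean document; each statement's English description precedes it below -/
import Mathlib

section
/- Let A be uniformly strongly elliptic with ellipticity ratio ρ(A) = λ(A)/Λ(A). Then (1 − ρ(A))/(1 + ρ(A)) ≤ d(A). -/
open MeasureTheory

noncomputable section

/-- `ℝ^d` with its Euclidean structure and Lebesgue measure. -/
abbrev Rd (d : ℕ) : Type := EuclideanSpace ℝ (Fin d)

/-- `(ℂ^N)^d ≅ ℂ^{dN}` with its Euclidean (Hermitian) structure. -/
abbrev CNd (d N : ℕ) : Type := EuclideanSpace ℂ (Fin d × Fin N)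

/-- The lower ellipticity constant `λ(A) = essinf_x min_{|ξ|=1} Re⟨A(x)ξ, ξ⟩`. -/
def lamE {d N : ℕ} (A : Rd d → (CNd d N →L[ℂ] CNd d N)) : ℝ :=
  essInf (fun x => sInf {r : ℝ | ∃ ξ : CNd d N, ‖ξ‖ = 1 ∧ r = (inner ℂ (A x ξ) ξ : ℂ).re}) volume

/-- The upper ellipticity constant `Λ(A) = esssup_x ‖A(x)‖`. -/
def LamE {d N : ℕ} (A : Rd d → (CNd d N →L[ℂ] CNd d N)) : ℝ :=
  essSup (fun x => ‖A x‖) volume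

/-- The distance function `d(A) = inf_{t ≥ 0} esssup_x ‖I - t A(x)‖`. -/
def distE {d N : ℕ} (A : Rd d → (CNd d N →L[ℂ] CNd d N)) : ℝ :=
  sInf {s : ℝ | ∃ t : ℝ, 0 ≤ t ∧
    s = essSup (fun x => ‖(1 : CNd d N →L[ℂ] CNd d N) - (t : ℂ) • A x‖) volume}

/-- Auxiliary: `|Re⟨Bξ, ξ⟩| ≤ ‖B‖` for a unit vector `ξ`. -/
lemma aux_abs_re_inner_le {d N : ℕ} (B : CNd d N →L[ℂ] CNd d N) (ξ : CNd d N)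
    (hξ : ‖ξ‖ = 1) : |(inner ℂ (B ξ) ξ : ℂ).re| ≤ ‖B‖ := by
  calc |(inner ℂ (B ξ) ξ : ℂ).re| ≤ ‖(inner ℂ (B ξ) ξ : ℂ)‖ := by
        simpa using Complex.abs_re_le_norm (inner ℂ (B ξ) ξ : ℂ)
    _ ≤ ‖B ξ‖ * ‖ξ‖ := norm_inner_le_norm _ _
    _ ≤ (‖B‖ * ‖ξ‖) * ‖ξ‖ := by gcongr; exact B.le_opNorm ξ
    _ = ‖B‖ := by rw [hξ]; ring

/-- Auxiliary: `Re⟨(I - tB)ξ, ξ⟩ = 1 - t Re⟨Bξ, ξ⟩` for a unit vector `ξ`. -/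
lemma aux_re_inner_sub {d N : ℕ} (B : CNd d N →L[ℂ] CNd d N) (ξ : CNd d N)
    (hξ : ‖ξ‖ = 1) (t : ℝ) :
    (inner ℂ (((1 : CNd d N →L[ℂ] CNd d N) - (t:ℂ) • B) ξ) ξ : ℂ).re
      = 1 - t * (inner ℂ (B ξ) ξ : ℂ).re := by
  simp [inner_sub_left, inner_smul_left, inner_self_eq_norm_sq_to_K, hξ, Finset.mul_sum]

/-- Auxiliary: `1 - t Re⟨Bξ, ξ⟩ ≤ ‖I - tB‖` for a unit vector `ξ`. -/
lemma aux_one_sub_le {d N : ℕ} (B : CNd d N →L[ℂ] CNd d N) (ξ : CNd d N)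
    (hξ : ‖ξ‖ = 1) (t : ℝ) :
    1 - t * (inner ℂ (B ξ) ξ : ℂ).re ≤ ‖(1 : CNd d N →L[ℂ] CNd d N) - (t:ℂ) • B‖ := by
  rw [← aux_re_inner_sub B ξ hξ t]
  calc (inner ℂ (((1 : CNd d N →L[ℂ] CNd d N) - (t:ℂ) • B) ξ) ξ : ℂ).re
      ≤ |(inner ℂ (((1 : CNd d N →L[ℂ] CNd d N) - (t:ℂ) • B) ξ) ξ : ℂ).re| := le_abs_self _
    _ ≤ ‖(1 : CNd d N →L[ℂ] CNd d N) - (t:ℂ) • B‖ := aux_abs_re_inner_le _ ξ hξ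

set_option maxHeartbeats 1000000

/-- for uniformly strongly elliptic `A` with ellipticity ratio
`ρ(A) = λ(A)/Λ(A)`, one has `(1 - ρ(A))/(1 + ρ(A)) ≤ d(A)`. -/
theorem stmt_1 {d N : ℕ} (hd : 3 ≤ d) (hN : 1 ≤ N)
    (A : Rd d → (CNd d N →L[ℂ] CNd d N)) (hmeas : StronglyMeasurable A)
    (hlam : 0 < lamE A)
    (hLam : ∃ C : ℝ, ∀ᵐ x ∂(volume : Measure (Rd d)), ‖A x‖ ≤ C) :
    (1 - lamE A / LamE A) / (1 + lamE A / LamE A) ≤ distE A := by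
  classical
  obtain ⟨C, hC⟩ := hLam
  have hd0 : 0 < d := by omega
  have hN0 : 0 < N := by omega
  have i0 : Fin d × Fin N := ⟨⟨0, hd0⟩, ⟨0, hN0⟩⟩
  set ξ0 : CNd d N := EuclideanSpace.single i0 (1:ℂ) with hξ0def
  have hξ0 : ‖ξ0‖ = 1 := by simp [hξ0def]
  haveI : Nontrivial (CNd d N) := by
    refine ⟨ξ0, 0, fun h => ?_⟩
    rw [h, norm_zero] at hξ0; norm_num at hξ0
  have hμ : (volume : Measure (Rd d)) ≠ 0 := NeZero.ne _
  haveI : (ae (volume : Measure (Rd d))).NeBot := ae_neBot.mpr hμ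
  -- notations
  set f : Rd d → ℝ := fun x =>
    sInf {r : ℝ | ∃ ξ : CNd d N, ‖ξ‖ = 1 ∧ r = (inner ℂ (A x ξ) ξ : ℂ).re} with hfdef
  have hSne : ∀ x, {r : ℝ | ∃ ξ : CNd d N, ‖ξ‖ = 1 ∧ r = (inner ℂ (A x ξ) ξ : ℂ).re}.Nonempty :=
    fun x => ⟨_, ξ0, hξ0, rfl⟩
  have hSbdd : ∀ x, BddBelow {r : ℝ | ∃ ξ : CNd d N, ‖ξ‖ = 1 ∧ r = (inner ℂ (A x ξ) ξ : ℂ).re} := by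
    intro x
    refine ⟨-‖A x‖, fun r hr => ?_⟩
    obtain ⟨ξ, hξ, rfl⟩ := hr
    have := aux_abs_re_inner_le (A x) ξ hξ
    linarith [abs_le.mp this]
  have hf_le : ∀ x, f x ≤ ‖A x‖ := by
    intro x
    refine le_trans (csInf_le (hSbdd x) ⟨ξ0, hξ0, rfl⟩) ?_
    have := aux_abs_re_inner_le (A x) ξ0 hξ0
    linarith [abs_le.mp this]
  -- rewrite lamE / LamE as sSup / sInf
  have hlamE : lamE A = sSup {b : ℝ | ∀ᵐ x ∂(volume : Measure (Rd d)), b ≤ f x} := by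
    rw [lamE, essInf, Filter.liminf_eq]
  have hLamE : LamE A = sInf {u : ℝ | ∀ᵐ x ∂(volume : Measure (Rd d)), ‖A x‖ ≤ u} := by
    rw [LamE, essSup, Filter.limsup_eq]
  set Ls : Set ℝ := {b : ℝ | ∀ᵐ x ∂(volume : Measure (Rd d)), b ≤ f x} with hLsdef
  set Us : Set ℝ := {u : ℝ | ∀ᵐ x ∂(volume : Measure (Rd d)), ‖A x‖ ≤ u} with hUsdef
  have hCU : C ∈ Us := hC
  have hU0 : ∀ u ∈ Us, 0 ≤ u := by
    intro u hu
    have hu' : ∀ᵐ x ∂(volume : Measure (Rd d)), ‖A x‖ ≤ u := hu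
    obtain ⟨x, hx⟩ := hu'.exists
    exact le_trans (norm_nonneg _) hx
  have hLamE0 : 0 ≤ LamE A := by rw [hLamE]; exact le_csInf ⟨C, hCU⟩ hU0
  have hLC : ∀ b ∈ Ls, b ≤ C := by
    intro b hb
    have hb' : ∀ᵐ x ∂(volume : Measure (Rd d)), b ≤ f x := hb
    obtain ⟨x, hx1, hx2⟩ := (hb'.and hC).exists
    exact le_trans hx1 (le_trans (hf_le x) hx2)
  have hlamLam : lamE A ≤ LamE A := by
    rw [hlamE]
    refine Real.sSup_le (fun b hb => ?_) hLamE0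
    rw [hLamE]
    refine le_csInf ⟨C, hCU⟩ (fun u hu => ?_)
    have hb' : ∀ᵐ x ∂(volume : Measure (Rd d)), b ≤ f x := hb
    have hu' : ∀ᵐ x ∂(volume : Measure (Rd d)), ‖A x‖ ≤ u := hu
    obtain ⟨x, hx1, hx2⟩ := (hb'.and hu').exists
    exact le_trans hx1 (le_trans (hf_le x) hx2)
  have hΛpos : 0 < LamE A := lt_of_lt_of_le hlam hlamLam
  -- main bound
  rw [distE]
  refine le_csInf ⟨_, 0, le_refl 0, rfl⟩ ?_
  rintro s ⟨t, ht0, rfl⟩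
  rw [essSup, Filter.limsup_eq]
  have hgC : ∀ᵐ x ∂(volume : Measure (Rd d)),
      ‖(1 : CNd d N →L[ℂ] CNd d N) - (t : ℂ) • A x‖ ≤ 1 + t * C := by
    filter_upwards [hC] with x hx
    calc ‖(1 : CNd d N →L[ℂ] CNd d N) - (t : ℂ) • A x‖
        ≤ ‖(1 : CNd d N →L[ℂ] CNd d N)‖ + ‖(t : ℂ) • A x‖ := norm_sub_le _ _
      _ ≤ 1 + t * C := by
          have hns : ‖(t : ℂ) • A x‖ = ‖(t : ℂ)‖ * ‖A x‖ :=
            norm_smul (β := CNd d N →L[ℂ] CNd d N) (t:ℂ) (A x)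
          rw [Complex.norm_real, Real.norm_eq_abs, abs_of_nonneg ht0] at hns
          have h1 : ‖(1 : CNd d N →L[ℂ] CNd d N)‖ = 1 := norm_one
          have : t * ‖A x‖ ≤ t * C := mul_le_mul_of_nonneg_left hx ht0
          rw [hns, h1]
          linarith
  refine le_csInf ⟨1 + t * C, hgC⟩ ?_
  intro a ha
  have ha' : ∀ᵐ x ∂(volume : Measure (Rd d)),
      ‖(1 : CNd d N →L[ℂ] CNd d N) - (t : ℂ) • A x‖ ≤ a := ha
  have key1 : 1 - t * lamE A ≤ a := by
    rcases eq_or_lt_of_le ht0 with h0 | htpos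
    · -- t = 0 : then ‖1 - 0‖ = 1 ≤ a
      obtain ⟨x, hx⟩ := ha'.exists
      subst h0
      have hz : (((0:ℝ) : ℂ)) • A x = 0 := by
        rw [Complex.ofReal_zero]; exact zero_smul (A := CNd d N →L[ℂ] CNd d N) ℂ _
      rw [hz, sub_zero, norm_one] at hx
      linarith
    · have hmem : (1 - a) / t ∈ Ls := by
        filter_upwards [ha'] with x hx
        refine le_csInf (hSne x) ?_
        rintro r ⟨ξ, hξ, rfl⟩
        have h1 := aux_one_sub_le (A x) ξ hξ t
        rw [div_le_iff₀ htpos]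
        nlinarith
      have : (1 - a) / t ≤ lamE A := by
        rw [hlamE]; exact le_csSup ⟨C, hLC⟩ hmem
      have h2 : (1 - a) ≤ t * lamE A := by
        rw [div_le_iff₀ htpos] at this; nlinarith
      linarith
  have key2 : t * LamE A - 1 ≤ a := by
    rcases eq_or_lt_of_le ht0 with h0 | htpos
    · obtain ⟨x, hx⟩ := ha'.exists
      have : 0 ≤ a := le_trans (norm_nonneg _) hx
      rw [← h0]; linarith
    · have hmem : (a + 1) / t ∈ Us := by
        filter_upwards [ha'] with x hx
        have h1 : ‖(t : ℂ) • A x‖ - ‖(1 : CNd d N →L[ℂ] CNd d N)‖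
            ≤ ‖(t : ℂ) • A x - (1 : CNd d N →L[ℂ] CNd d N)‖ := norm_sub_norm_le _ _
        rw [norm_sub_rev] at h1
        have hns : ‖(t : ℂ) • A x‖ = ‖(t : ℂ)‖ * ‖A x‖ :=
          norm_smul (β := CNd d N →L[ℂ] CNd d N) (t:ℂ) (A x)
        rw [Complex.norm_real, Real.norm_eq_abs, abs_of_nonneg ht0] at hns
        rw [hns, norm_one] at h1
        rw [le_div_iff₀ htpos]
        nlinarith
      have : LamE A ≤ (a + 1) / t := by
        rw [hLamE]; exact csInf_le ⟨0, hU0⟩ hmem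
      rw [le_div_iff₀ htpos] at this
      nlinarith
  have hrw : (1 - lamE A / LamE A) / (1 + lamE A / LamE A)
      = (LamE A - lamE A) / (LamE A + lamE A) := by
    have h1 : LamE A ≠ 0 := ne_of_gt hΛpos
    have h2 : LamE A + lamE A ≠ 0 := ne_of_gt (add_pos hΛpos hlam)
    field_simp
  rw [hrw, div_le_iff₀ (add_pos hΛpos hlam)]
  nlinarith [mul_nonneg (sub_nonneg.mpr key1) hΛpos.le,
    mul_nonneg (sub_nonneg.mpr key2) hlam.le]

end
end

section
/- Let d ≥ 3 be an integer, c > 0 and D ≥ (c²+1)/((d−2)c). Then the radicand d²/4 − (d(d−1)cD + (d−1)D²)/(1+(c+D)²) is nonnegative, the number b := d/2 − (d²/4 − (d(d−1)cD + (d−1)D²)/(1+(c+D)²))^{1/2} satisfies 1 ≤ b < d/2, and b = 1 if and only if D = (c²+1)/((d−2)c). -/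
/-- The De Giorgi exponent `b = d/2 - (d²/4 - (d(d-1)cD + (d-1)D²)/(1+(c+D)²))^{1/2}`. -/
noncomputable def bExp (d : ℕ) (c D : ℝ) : ℝ :=
  (d : ℝ) / 2 - Real.sqrt ((d : ℝ) ^ 2 / 4 -
    ((d : ℝ) * ((d : ℝ) - 1) * c * D + ((d : ℝ) - 1) * D ^ 2) / (1 + (c + D) ^ 2))

set_option maxHeartbeats 1000000 in
/-- for `d ≥ 3`, `c > 0` and `D ≥ (c²+1)/((d-2)c)`, the radicand in the
definition of `b` is nonnegative, `1 ≤ b < d/2`, and `b = 1` iff `D = (c²+1)/((d-2)c)`. -/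
theorem stmt_8 (d : ℕ) (hd : 3 ≤ d) (c D : ℝ) (hc : 0 < c)
    (hD : (c ^ 2 + 1) / (((d : ℝ) - 2) * c) ≤ D) :
    0 ≤ (d : ℝ) ^ 2 / 4 -
        ((d : ℝ) * ((d : ℝ) - 1) * c * D + ((d : ℝ) - 1) * D ^ 2) / (1 + (c + D) ^ 2) ∧
      1 ≤ bExp d c D ∧ bExp d c D < (d : ℝ) / 2 ∧
      (bExp d c D = 1 ↔ D = (c ^ 2 + 1) / (((d : ℝ) - 2) * c)) := by
  have hd3 : (3 : ℝ) ≤ (d : ℝ) := by exact_mod_cast hd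
  simp only [bExp]
  set dr := (d : ℝ) with hdr
  have hE : (0 : ℝ) < 1 + (c + D) ^ 2 := by positivity
  have hdc : 0 < (dr - 2) * c := by nlinarith
  have hcD : c ^ 2 + 1 ≤ (dr - 2) * c * D := by
    rw [div_le_iff₀ hdc] at hD; nlinarith
  set N := dr * (dr - 1) * c * D + (dr - 1) * D ^ 2 with hN
  have key1 : N / (1 + (c + D) ^ 2) < dr ^ 2 / 4 := by
    rw [div_lt_iff₀ hE]
    nlinarith [sq_nonneg ((dr - 2) * D - dr * c), sq_nonneg dr]
  have hR0 : 0 < dr ^ 2 / 4 - N / (1 + (c + D) ^ 2) := by linarith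
  have key2 : dr ^ 2 / 4 - N / (1 + (c + D) ^ 2) ≤ (dr / 2 - 1) ^ 2 := by
    have h : dr - 1 ≤ N / (1 + (c + D) ^ 2) := by
      rw [le_div_iff₀ hE]
      nlinarith
    nlinarith
  have hsq : Real.sqrt (dr ^ 2 / 4 - N / (1 + (c + D) ^ 2)) ≤ dr / 2 - 1 := by
    have h := Real.sqrt_le_sqrt key2
    rwa [Real.sqrt_sq (by linarith)] at h
  have hspos : 0 < Real.sqrt (dr ^ 2 / 4 - N / (1 + (c + D) ^ 2)) :=
    Real.sqrt_pos.mpr hR0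
  refine ⟨le_of_lt hR0, by linarith, by linarith, ?_⟩
  constructor
  · intro h
    have hs : Real.sqrt (dr ^ 2 / 4 - N / (1 + (c + D) ^ 2)) = dr / 2 - 1 := by linarith
    have hsq2 : dr ^ 2 / 4 - N / (1 + (c + D) ^ 2) = (dr / 2 - 1) ^ 2 := by
      rw [← hs, Real.sq_sqrt hR0.le]
    have hq : N / (1 + (c + D) ^ 2) = dr - 1 := by linear_combination -hsq2
    have hNE : N = (dr - 1) * (1 + (c + D) ^ 2) := by
      rw [div_eq_iff hE.ne'] at hq; exact hq
    have h0 : (dr - 1) * ((dr - 2) * c * D - (c ^ 2 + 1)) = 0 := by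
      linear_combination hNE
    have h1 : (dr - 2) * c * D - (c ^ 2 + 1) = 0 := by
      rcases mul_eq_zero.mp h0 with h' | h'
      · linarith
      · exact h'
    rw [eq_div_iff hdc.ne']
    linear_combination h1
  · intro h
    have hD2 : (dr - 2) * c * D = c ^ 2 + 1 := by
      rw [h]; field_simp; exact div_self (by linarith : (0:ℝ) < dr - 2).ne'
    have hq : N / (1 + (c + D) ^ 2) = dr - 1 := by
      rw [div_eq_iff hE.ne']
      linear_combination (dr - 1) * hD2
    rw [hq]
    have h2 : dr ^ 2 / 4 - (dr - 1) = (dr / 2 - 1) ^ 2 := by ring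
    rw [h2, Real.sqrt_sq (by linarith)]
    ring
end

section
/- The function g(q) := ln(2q−2) − q(q−2)/(2(q−1)) has a unique zero σ on the interval (2, ∞), and 5.69 < σ < 5.70. Moreover, σ is the global minimizer of f(q) := (2q/(q−2)) · ln(2q−2) on (2, ∞): for every q > 2, f(q) ≥ f(σ). -/
noncomputable def gfun (q : ℝ) : ℝ := Real.log (2*q-2) - q*(q-2)/(2*(q-1))
noncomputable def ffun (q : ℝ) : ℝ := (2*q/(q-2)) * Real.log (2*q-2)

lemma hg (q : ℝ) (hq : 1 < q) :
    HasDerivAt gfun (-2*(q-2)^2/(2*q-2)^2) q := by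
  have h0 : (2*q-2 : ℝ) ≠ 0 := by nlinarith
  have h1 : (2*(q-1) : ℝ) ≠ 0 := by nlinarith
  have hl : HasDerivAt (fun q : ℝ => Real.log (2*q-2)) ((2*q-2)⁻¹ * 2) q := by
    have hlin : HasDerivAt (fun q : ℝ => 2*q-2) 2 q := by
      simpa using ((hasDerivAt_id q).const_mul 2).sub_const 2
    exact (Real.hasDerivAt_log h0).comp q hlin
  have hu : HasDerivAt (fun q : ℝ => q*(q-2)) (1*(q-2)+q*1) q :=
    (hasDerivAt_id q).mul ((hasDerivAt_id q).sub_const 2)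
  have hv : HasDerivAt (fun q : ℝ => 2*(q-1)) 2 q := by
    simpa using ((hasDerivAt_id q).sub_const 1).const_mul 2
  have hd := hu.div hv h1
  have := hl.sub hd
  refine this.congr_deriv ?_
  field_simp
  ring

lemma hf (q : ℝ) (hq : 2 < q) :
    HasDerivAt ffun (-(4/(q-2)^2) * gfun q) q := by
  have h0 : (2*q-2 : ℝ) ≠ 0 := by nlinarith
  have h2 : (q-2 : ℝ) ≠ 0 := by nlinarith
  have hl : HasDerivAt (fun q : ℝ => Real.log (2*q-2)) ((2*q-2)⁻¹ * 2) q := by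
    have hlin : HasDerivAt (fun q : ℝ => 2*q-2) 2 q := by
      simpa using ((hasDerivAt_id q).const_mul 2).sub_const 2
    exact (Real.hasDerivAt_log h0).comp q hlin
  have hu : HasDerivAt (fun q : ℝ => 2*q/(q-2)) ((2*1*(q-2) - 2*q*1)/(q-2)^2) q := by
    exact (((hasDerivAt_id q).const_mul 2).div ((hasDerivAt_id q).sub_const 2) h2).congr_deriv (by simp)
  have := hu.mul hl
  refine this.congr_deriv ?_
  unfold gfun
  have h1 : (2*(q-1) : ℝ) ≠ 0 := by nlinarith
  field_simp
  ring

lemma exp2_lt : Real.exp 2 < 2.7182818286^2 := by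
  rw [show (2:ℝ) = 1+1 by norm_num, Real.exp_add]
  nlinarith [Real.exp_one_lt_d9, Real.exp_pos 1]

lemma exp2_gt : (2.7182818283:ℝ)^2 < Real.exp 2 := by
  rw [show (2:ℝ) = 1+1 by norm_num, Real.exp_add]
  nlinarith [Real.exp_one_gt_d9, Real.exp_pos 1]

lemma gpos : 0 < gfun 5.69 := by
  have key : Real.exp (20.9961/9.38) < 9.38 := by
    rw [show (20.9961:ℝ)/9.38 = 2 + 22361/93800 by norm_num, Real.exp_add]
    have hb := Real.exp_bound (x := 22361/93800) (by rw [abs_of_nonneg] <;> norm_num)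
      (n := 4) (by norm_num)
    rw [abs_of_nonneg (by norm_num : (0:ℝ) ≤ 22361/93800)] at hb
    rw [Finset.sum_range_succ, Finset.sum_range_succ, Finset.sum_range_succ,
      Finset.sum_range_succ, Finset.sum_range_zero] at hb
    norm_num [Nat.factorial] at hb
    have h1 : Real.exp (22361/93800) ≤ 1 + 22361/93800 + (22361/93800)^2/2
        + (22361/93800)^3/6 + (22361/93800)^4 * (5/96) := by
      cases abs_le.mp hb with
      | intro h _ => nlinarith [h]
    nlinarith [exp2_lt, Real.exp_pos 2, Real.exp_pos (22361/93800 : ℝ)]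
  have h38 : (0:ℝ) < 9.38 := by norm_num
  have := (Real.lt_log_iff_exp_lt h38).mpr key
  unfold gfun
  norm_num at this ⊢
  linarith

lemma gneg : gfun 5.70 < 0 := by
  have key : (9.40:ℝ) < Real.exp (21.09/9.40) := by
    rw [show (21.09:ℝ)/9.40 = 2 + 229/940 by norm_num, Real.exp_add]
    have hb := Real.exp_bound (x := 229/940) (by rw [abs_of_nonneg] <;> norm_num)
      (n := 4) (by norm_num)
    rw [abs_of_nonneg (by norm_num : (0:ℝ) ≤ 229/940)] at hb
    rw [Finset.sum_range_succ, Finset.sum_range_succ, Finset.sum_range_succ,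
      Finset.sum_range_succ, Finset.sum_range_zero] at hb
    norm_num [Nat.factorial] at hb
    have h1 : 1 + 229/940 + (229/940)^2/2 + (229/940)^3/6 - (229/940)^4 * (5/96)
        ≤ Real.exp (229/940) := by
      cases abs_le.mp hb with
      | intro _ h => nlinarith [h]
    nlinarith [exp2_gt, Real.exp_pos 2, Real.exp_pos (229/940 : ℝ)]
  have h40 : (0:ℝ) < 9.40 := by norm_num
  have hlog : Real.log 9.40 < 21.09/9.40 := by
    have h := Real.log_lt_log h40 key
    rwa [Real.log_exp] at h
  unfold gfun
  norm_num at hlog ⊢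
  linarith

lemma g_anti : StrictAntiOn gfun (Set.Ioi 2) := by
  apply strictAntiOn_of_deriv_neg (convex_Ioi 2)
  · exact fun x hx => ((hg x (by linarith [Set.mem_Ioi.mp hx])).continuousAt).continuousWithinAt
  · intro x hx
    rw [interior_Ioi] at hx
    have hx2 : (2:ℝ) < x := hx
    rw [(hg x (by linarith)).deriv]
    apply div_neg_of_neg_of_pos
    · nlinarith
    · nlinarith

lemma f_min (σ : ℝ) (hσ2 : 2 < σ) (hσ0 : gfun σ = 0) :
    ∀ q : ℝ, 2 < q → ffun σ ≤ ffun q := by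
  have hanti : AntitoneOn ffun (Set.Ioc 2 σ) := by
    apply antitoneOn_of_deriv_nonpos (convex_Ioc 2 σ)
    · exact fun x hx => ((hf x hx.1).continuousAt).continuousWithinAt
    · intro x hx
      rw [interior_Ioc] at hx
      exact ((hf x hx.1).differentiableAt).differentiableWithinAt
    · intro x hx
      rw [interior_Ioc] at hx
      rw [(hf x hx.1).deriv]
      have hgx : 0 < gfun x := hσ0 ▸ g_anti (Set.mem_Ioi.mpr hx.1) (Set.mem_Ioi.mpr hσ2) hx.2
      have hne : (x-2:ℝ) ≠ 0 := by linarith [hx.1]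
      have : (0:ℝ) < 4/(x-2)^2 := by positivity
      nlinarith
  have hmono : MonotoneOn ffun (Set.Ici σ) := by
    apply monotoneOn_of_deriv_nonneg (convex_Ici σ)
    · exact fun x hx => ((hf x (lt_of_lt_of_le hσ2 hx)).continuousAt).continuousWithinAt
    · intro x hx
      rw [interior_Ici] at hx
      exact ((hf x (by linarith [Set.mem_Ioi.mp hx])).differentiableAt).differentiableWithinAt
    · intro x hx
      rw [interior_Ici] at hx
      have hx2 : (2:ℝ) < x := by linarith [Set.mem_Ioi.mp hx]
      rw [(hf x hx2).deriv]
      have hgx : gfun x < 0 := hσ0 ▸ g_anti (Set.mem_Ioi.mpr hσ2) (Set.mem_Ioi.mpr hx2) hx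
      have hne : (x-2:ℝ) ≠ 0 := by linarith
      have : (0:ℝ) < 4/(x-2)^2 := by positivity
      nlinarith
  intro q hq
  rcases le_or_gt q σ with h | h
  · exact hanti (Set.mem_Ioc.mpr ⟨hq, h⟩) (Set.mem_Ioc.mpr ⟨hσ2, le_refl σ⟩) h
  · exact hmono (Set.mem_Ici.mpr (le_refl σ)) (Set.mem_Ici.mpr h.le) h.le



/-- the function `g(q) = ln(2q-2) - q(q-2)/(2(q-1))` has a unique zero `σ`
in `(2,∞)`, `5.69 < σ < 5.70`, and `σ` is the global minimizer of
`f(q) = (2q/(q-2)) ln(2q-2)` on `(2,∞)`. -/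
theorem stmt_12 :
    ∃ σ : ℝ, 2 < σ ∧
      Real.log (2 * σ - 2) - σ * (σ - 2) / (2 * (σ - 1)) = 0 ∧
      (∀ q : ℝ, 2 < q → Real.log (2 * q - 2) - q * (q - 2) / (2 * (q - 1)) = 0 → q = σ) ∧
      5.69 < σ ∧ σ < 5.70 ∧
      (∀ q : ℝ, 2 < q →
        (2 * σ / (σ - 2)) * Real.log (2 * σ - 2) ≤ (2 * q / (q - 2)) * Real.log (2 * q - 2)) := by
  have hcont : ContinuousOn gfun (Set.Icc 5.69 5.70) := by
    intro x hx
    have : (1:ℝ) < x := by linarith [hx.1]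
    exact ((hg x this).continuousAt).continuousWithinAt
  have hsub := intermediate_value_Icc' (by norm_num : (5.69:ℝ) ≤ 5.70) hcont
  have h0mem : (0:ℝ) ∈ Set.Icc (gfun 5.70) (gfun 5.69) :=
    Set.mem_Icc.mpr ⟨gneg.le, gpos.le⟩
  obtain ⟨σ, hσmem, hσ0⟩ := hsub h0mem
  have hσ2 : (2:ℝ) < σ := by linarith [hσmem.1]
  have hlt1 : 5.69 < σ := by
    rcases lt_or_eq_of_le hσmem.1 with h | h
    · exact h
    · exfalso; rw [← h] at hσ0; linarith [gpos, hσ0]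
  have hlt2 : σ < 5.70 := by
    rcases lt_or_eq_of_le hσmem.2 with h | h
    · exact h
    · exfalso; rw [h] at hσ0; linarith [gneg, hσ0]
  refine ⟨σ, hσ2, hσ0, ?_, hlt1, hlt2, ?_⟩
  · intro q hq hq0
    exact g_anti.injOn (Set.mem_Ioi.mpr hq) (Set.mem_Ioi.mpr hσ2)
      (by unfold gfun at hσ0 ⊢; rw [hq0, hσ0])
  · intro q hq
    exact f_min σ hσ2 hσ0 q hq
end

section
/- Let σ ∈ (2,∞) be the unique real solution of ln(2σ−2) = σ(σ−2)/(2(σ−1)). Suppose c : [2, ∞) → [1, ∞) is a function satisfying: (a) c(2) = 1; (b) c(p) ≤ 2(p−1) for all p ≥ 2; and (c) the interpolation property: whenever 2 ≤ p ≤ q and θ ∈ [0,1] satisfy 1/p = (1−θ)/2 + θ/q, one has c(p) ≤ c(q)^θ. Then for every p with 2 ≤ p ≤ σ, c(p) ≤ exp((σ²/(σ−1)) · (1/2 − 1/p)). -/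
/-- if `σ ∈ (2,∞)` solves `ln(2σ-2) = σ(σ-2)/(2(σ-1))` and `c : [2,∞) → [1,∞)`
satisfies `c(2) = 1`, `c(p) ≤ 2(p-1)` and the Riesz–Thorin interpolation property, then
`c(p) ≤ exp((σ²/(σ-1))(1/2 - 1/p))` for all `2 ≤ p ≤ σ`. -/
theorem stmt_13 (σ : ℝ) (hσ : 2 < σ)
    (hσeq : Real.log (2 * σ - 2) = σ * (σ - 2) / (2 * (σ - 1)))
    (c : ℝ → ℝ)
    (hc_range : ∀ p : ℝ, 2 ≤ p → 1 ≤ c p)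
    (hc2 : c 2 = 1)
    (hcDV : ∀ p : ℝ, 2 ≤ p → c p ≤ 2 * (p - 1))
    (hc_interp : ∀ p q θ : ℝ, 2 ≤ p → p ≤ q → 0 ≤ θ → θ ≤ 1 →
      1 / p = (1 - θ) / 2 + θ / q → c p ≤ (c q) ^ θ) :
    ∀ p : ℝ, 2 ≤ p → p ≤ σ → c p ≤ Real.exp ((σ ^ 2 / (σ - 1)) * (1 / 2 - 1 / p)) := by
  intro p hp2 hpσ
  have hp0 : (0:ℝ) < p := by linarith
  have hσ0 : (0:ℝ) < σ := by linarith
  have hd : (0:ℝ) < 1/2 - 1/σ := by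
    have : 1/σ < 1/2 := by
      rw [div_lt_div_iff₀ hσ0 (by norm_num)]; linarith
    linarith
  have hpd : 1/p ≤ 1/2 := by
    rw [div_le_div_iff₀ hp0 (by norm_num)]; linarith
  have hσp : 1/σ ≤ 1/p := by
    apply one_div_le_one_div_of_le hp0 hpσ
  set θ : ℝ := (1/2 - 1/p) / (1/2 - 1/σ) with hθdef
  have hθ0 : 0 ≤ θ := div_nonneg (by linarith) hd.le
  have hθ1 : θ ≤ 1 := by
    rw [div_le_one hd]; linarith
  have hθmul : θ * (1/2 - 1/σ) = 1/2 - 1/p := div_mul_cancel₀ _ hd.ne'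
  have hinterp : 1/p = (1 - θ)/2 + θ/σ := by
    have : (1 - θ)/2 + θ/σ = 1/2 - θ * (1/2 - 1/σ) := by ring
    rw [this, hθmul]; ring
  have h1 := hc_interp p σ θ hp2 hpσ hθ0 hθ1 hinterp
  have hcσ : c σ ≤ 2 * σ - 2 := by
    have := hcDV σ hσ.le; linarith
  have h2 : (c σ) ^ θ ≤ (2 * σ - 2) ^ θ :=
    Real.rpow_le_rpow (le_trans zero_le_one (hc_range σ hσ.le)) hcσ hθ0
  have hpos : (0:ℝ) < 2 * σ - 2 := by linarith
  have h3 : (2 * σ - 2) ^ θ = Real.exp ((σ ^ 2 / (σ - 1)) * (1 / 2 - 1 / p)) := by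
    rw [Real.rpow_def_of_pos hpos, hσeq]
    congr 1
    rw [hθdef]
    have h2σ : (1:ℝ)/2 - 1/σ = (σ - 2) / (2 * σ) := by
      field_simp
    rw [h2σ]
    have hσ2 : σ - 2 ≠ 0 := by linarith
    have hσ1 : σ - 1 ≠ 0 := by linarith
    field_simp
  calc c p ≤ (c σ) ^ θ := h1
    _ ≤ (2 * σ - 2) ^ θ := h2
    _ = _ := h3
end

section
/- Let σ ∈ (2,∞) be the unique real solution of ln(2σ−2) = σ(σ−2)/(2(σ−1)). Then for every p with 2 ≤ p ≤ σ, exp((σ²/(σ−1)) · (1/2 − 1/p)) ≤ 2(p−1). -/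
/-- if `σ ∈ (2,∞)` solves `ln(2σ-2) = σ(σ-2)/(2(σ-1))`, then for all
`2 ≤ p ≤ σ` one has `exp((σ²/(σ-1))(1/2 - 1/p)) ≤ 2(p-1)`. -/
theorem stmt_14 (σ : ℝ) (hσ : 2 < σ)
    (hσeq : Real.log (2 * σ - 2) = σ * (σ - 2) / (2 * (σ - 1))) :
    ∀ p : ℝ, 2 ≤ p → p ≤ σ →
      Real.exp ((σ ^ 2 / (σ - 1)) * (1 / 2 - 1 / p)) ≤ 2 * (p - 1) := by
  intro p hp2 hpσ
  have hσ1 : (0:ℝ) < σ - 1 := by linarith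
  set c : ℝ := σ ^ 2 / (σ - 1) with hc
  have hcval : c * (σ - 1) = σ ^ 2 := by
    rw [hc]; exact div_mul_cancel₀ _ hσ1.ne'
  have hp1 : (0:ℝ) < p - 1 := by linarith
  have hp0 : (0:ℝ) < p := by linarith
  -- the auxiliary function
  have hderiv : ∀ x ∈ Set.Ioo (2:ℝ) σ,
      HasDerivAt (fun x : ℝ => Real.log (2 * x - 2) + c / x)
        (2 / (2 * x - 2) + (-c / x ^ 2)) x := by
    intro x hx
    have hx2 : (0:ℝ) < 2 * x - 2 := by nlinarith [hx.1]
    have hx0 : x ≠ 0 := by nlinarith [hx.1]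
    have h1 : HasDerivAt (fun x : ℝ => Real.log (2 * x - 2)) (2 / (2 * x - 2)) x := by
      have : HasDerivAt (fun x : ℝ => 2 * x - 2) 2 x := by
        simpa using ((hasDerivAt_id x).const_mul 2).sub_const 2
      simpa [div_eq_mul_inv, mul_comm, Function.comp_def] using (Real.hasDerivAt_log hx2.ne').comp x this
    have h2 : HasDerivAt (fun x : ℝ => c / x) (-c / x ^ 2) x := by
      simpa [div_eq_mul_inv, neg_div, mul_div_assoc] using (hasDerivAt_inv hx0).const_mul c
    exact h1.add h2
  have hmono : AntitoneOn (fun x : ℝ => Real.log (2 * x - 2) + c / x) (Set.Icc 2 σ) := by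
    apply antitoneOn_of_deriv_nonpos (convex_Icc 2 σ)
    · apply ContinuousOn.add
      · apply ContinuousOn.log
        · fun_prop
        · intro x hx
          have := hx.1
          nlinarith
      · apply ContinuousOn.div continuousOn_const continuousOn_id
        intro x hx
        simp only [id_eq]
        have := hx.1
        intro h
        linarith
    · intro x hx
      rw [interior_Icc] at hx
      exact (hderiv x hx).differentiableAt.differentiableWithinAt
    · intro x hx
      rw [interior_Icc] at hx
      rw [(hderiv x hx).deriv]
      have hx2 : (0:ℝ) < 2 * x - 2 := by nlinarith [hx.1]
      have hx0 : (0:ℝ) < x := by nlinarith [hx.1]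
      rw [div_add_div _ _ hx2.ne' (by positivity : (x:ℝ)^2 ≠ 0), div_nonpos_iff]
      right
      constructor
      · -- 2 * x^2 + (2*x-2) * (-c) ≤ 0, i.e. 2x² ≤ c(2x-2), i.e. x²(σ-1) ≤ σ²(x-1)
        have hA : (0:ℝ) ≤ σ - x := by linarith [hx.2]
        have hB : (0:ℝ) ≤ σ * x - σ - x := by nlinarith [hx.1]
        have key : x ^ 2 * (σ - 1) ≤ σ ^ 2 * (x - 1) := by nlinarith [mul_nonneg hA hB]
        have hthis : 2 * x ^ 2 ≤ c * (2 * x - 2) := by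
          rw [hc, div_mul_eq_mul_div, le_div_iff₀ hσ1]
          nlinarith
        nlinarith
      · positivity
  have hmem1 : p ∈ Set.Icc (2:ℝ) σ := ⟨hp2, hpσ⟩
  have hmem2 : σ ∈ Set.Icc (2:ℝ) σ := ⟨by linarith, le_refl σ⟩
  have hkey := hmono hmem1 hmem2 hpσ
  simp only at hkey
  -- h σ = c/2
  have hσval : Real.log (2 * σ - 2) + c / σ = c / 2 := by
    rw [hσeq, hc]
    field_simp
    ring
  rw [hσval] at hkey
  have hlog : c * (1 / 2 - 1 / p) ≤ Real.log (2 * p - 2) := by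
    have : c / 2 - c / p ≤ Real.log (2 * p - 2) := by linarith
    calc c * (1 / 2 - 1 / p) = c / 2 - c / p := by ring
    _ ≤ _ := this
  calc Real.exp (c * (1 / 2 - 1 / p)) ≤ Real.exp (Real.log (2 * p - 2)) :=
        Real.exp_le_exp.mpr hlog
    _ = 2 * p - 2 := Real.exp_log (by linarith)
    _ = 2 * (p - 1) := by ring
end
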